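/- arXiv:1303.0808 — 2 statements merged into one kernel-verified Lean document; each statement's English description precedes it below -/
import Mathlib

section
/- Let ρ₁, …, ρ_M and more generally ρ_x (x in a finite set X) be quantum states on ℂ^d, let A₁, …, A_M be d×d matrices with 0 ≤ A_j ≤ I, and fix m ∈ {1,…,M}. Let Π₁, …, Π_M be orthogonal projections on ℂ^d ⊗ (ℂ²)^{⊗M} satisfying Tr{Π_j (τ ⊗ |0̄⟩⟨0̄|)} = Tr{A_j τ} for every d×d matrix τ (Naimark extensions of the A_j). Then the error probability of the sequential decoder on input ρ_m, namely 1 − Tr{ Π_m (I − Π_{m−1}) ⋯ (I − Π₁) (ρ_m ⊗ |0̄⟩⟨0̄|) (I − Π₁) ⋯ (I − Π_{m−1}) Π_m }, is at most 2·√( 1 − Tr{A_m ρ_m} + Σ_{j ≠ m} Tr{A_j ρ_m} ). -/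
open Matrix Kronecker ComplexOrder

/-- The projection `|0̄⟩⟨0̄|` onto the all-zeros computational basis state of `M` qubit
probe systems. -/
def probeZero (M : ℕ) : Matrix (Fin M → Fin 2) (Fin M → Fin 2) ℂ :=
  Matrix.single (fun _ => 0) (fun _ => 0) 1

namespace SDEB

variable {n : Type*} [Fintype n] [DecidableEq n]

/-- Frobenius (Hilbert–Schmidt) real inner product of matrices. -/
noncomputable def fip (X Y : Matrix n n ℂ) : ℝ := ((Xᴴ * Y).trace).re

/-- Matrix as a vector in Euclidean space. -/
def toE (X : Matrix n n ℂ) : EuclideanSpace ℂ (n × n) := WithLp.toLp 2 (fun p : n × n => X p.1 p.2)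

lemma fip_eq_inner (X Y : Matrix n n ℂ) :
    fip X Y = RCLike.re (inner ℂ (toE X) (toE Y) : ℂ) := by
  simp only [fip, PiLp.inner_apply, RCLike.inner_apply, toE, PiLp.toLp_apply, Matrix.trace,
    Matrix.diag, Matrix.mul_apply, Matrix.conjTranspose_apply]
  rw [Fintype.sum_prod_type]
  rw [Finset.sum_comm]
  simp [RCLike.star_def, mul_comm]

lemma fip_self_nonneg (X : Matrix n n ℂ) : 0 ≤ fip X X := by
  rw [fip_eq_inner]; exact inner_self_nonneg

lemma fip_le (X Y : Matrix n n ℂ) :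
    fip X Y ≤ Real.sqrt (fip X X) * Real.sqrt (fip Y Y) := by
  rw [fip_eq_inner, fip_eq_inner, fip_eq_inner]
  calc RCLike.re (inner ℂ (toE X) (toE Y) : ℂ) ≤ ‖toE X‖ * ‖toE Y‖ := re_inner_le_norm _ _
    _ = _ := by rw [norm_eq_sqrt_re_inner (𝕜 := ℂ), norm_eq_sqrt_re_inner (𝕜 := ℂ)]

lemma fip_sub_right (X Y Z : Matrix n n ℂ) : fip X (Y - Z) = fip X Y - fip X Z := by
  simp [fip, Matrix.mul_sub]

lemma fip_add_right (X Y Z : Matrix n n ℂ) : fip X (Y + Z) = fip X Y + fip X Z := by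
  simp [fip, Matrix.mul_add]

lemma fip_comm (X Y : Matrix n n ℂ) : fip X Y = fip Y X := by
  have : (Xᴴ * Y) = (Yᴴ * X)ᴴ := by simp
  rw [fip, this, Matrix.trace_conjTranspose]
  simp [fip, RCLike.star_def]

lemma fip_proj {Q : Matrix n n ℂ} (hQ : Qᴴ = Q) (hQ2 : Q * Q = Q) (X Y : Matrix n n ℂ) :
    fip X (Q * Y) = fip (Q * X) (Q * Y) := by
  unfold fip
  congr 2
  rw [Matrix.conjTranspose_mul, hQ, Matrix.mul_assoc, ← Matrix.mul_assoc Q Q Y, hQ2]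

lemma herm_idem_oneSub {Q : Matrix n n ℂ} (hQ : Qᴴ = Q) (hQ2 : Q * Q = Q) :
    ((1 : Matrix n n ℂ) - Q)ᴴ = 1 - Q ∧ ((1 : Matrix n n ℂ) - Q) * (1 - Q) = 1 - Q := by
  constructor
  · simp [Matrix.conjTranspose_sub, hQ]
  · rw [Matrix.sub_mul, Matrix.mul_sub, Matrix.mul_sub, hQ2]
    simp

lemma fip_pyth {Q : Matrix n n ℂ} (hQ : Qᴴ = Q) (hQ2 : Q * Q = Q) (X : Matrix n n ℂ) :
    fip X X = fip (Q * X) (Q * X) + fip ((1 - Q) * X) ((1 - Q) * X) := by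
  obtain ⟨h1, h2⟩ := herm_idem_oneSub hQ hQ2
  rw [← fip_proj hQ hQ2 X X, ← fip_proj h1 h2 X X, ← fip_add_right]
  congr 1
  rw [Matrix.sub_mul, Matrix.one_mul]
  abel

lemma prod_fip_le (L : List (Matrix n n ℂ)) (hL : ∀ Q ∈ L, Qᴴ = Q ∧ Q * Q = Q)
    (B : Matrix n n ℂ) : fip (L.prod * B) (L.prod * B) ≤ fip B B := by
  induction L with
  | nil => simp
  | cons Q L' ih =>
    have hQ := hL Q (by simp)
    have hL' : ∀ R ∈ L', Rᴴ = R ∧ R * R = R := fun R hR => hL R (by simp [hR])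
    rw [List.prod_cons, Matrix.mul_assoc]
    have hp := fip_pyth hQ.1 hQ.2 (L'.prod * B)
    have h2 := fip_self_nonneg ((1 - Q) * (L'.prod * B))
    linarith [ih hL']

lemma sqrt_cs {a b c d : ℝ} (ha : 0 ≤ a) (hb : 0 ≤ b) (hc : 0 ≤ c) (hd : 0 ≤ d) :
    Real.sqrt a * Real.sqrt b + Real.sqrt c * Real.sqrt d
      ≤ Real.sqrt (a + c) * Real.sqrt (b + d) := by
  have h1 : Real.sqrt (a + c) * Real.sqrt (b + d) = Real.sqrt ((a + c) * (b + d)) :=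
    (Real.sqrt_mul (by linarith) _).symm
  rw [h1, Real.le_sqrt (by positivity) (by positivity)]
  nlinarith [Real.sq_sqrt ha, Real.sq_sqrt hb, Real.sq_sqrt hc, Real.sq_sqrt hd,
    Real.sqrt_nonneg a, Real.sqrt_nonneg b, Real.sqrt_nonneg c, Real.sqrt_nonneg d,
    sq_nonneg (Real.sqrt a * Real.sqrt d - Real.sqrt c * Real.sqrt b)]

lemma list_sum_nonneg (L : List (Matrix n n ℂ)) (B : Matrix n n ℂ) :
    0 ≤ ((L.map fun Q => fip ((1 - Q) * B) ((1 - Q) * B)).sum) := by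
  apply List.sum_nonneg
  intro x hx
  obtain ⟨Q, _, rfl⟩ := List.mem_map.mp hx
  exact fip_self_nonneg _

lemma key (L : List (Matrix n n ℂ)) (hL : ∀ Q ∈ L, Qᴴ = Q ∧ Q * Q = Q) (B : Matrix n n ℂ) :
    fip B (B - L.prod * B)
      ≤ Real.sqrt ((L.map fun Q => fip ((1 - Q) * B) ((1 - Q) * B)).sum)
        * Real.sqrt (fip B B - fip (L.prod * B) (L.prod * B)) := by
  induction L with
  | nil => simp [fip]
  | cons Q L' ih =>
    have hQ := hL Q (by simp)
    have hL' : ∀ R ∈ L', Rᴴ = R ∧ R * R = R := fun R hR => hL R (by simp [hR])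
    obtain ⟨h1, h2⟩ := herm_idem_oneSub hQ.1 hQ.2
    set s' := L'.prod * B with hs'
    have hsplit : (Q :: L').prod * B = Q * s' := by rw [List.prod_cons, Matrix.mul_assoc]
    have hdiff : s' - Q * s' = (1 - Q) * s' := by rw [Matrix.sub_mul, Matrix.one_mul]
    have hdecomp : B - (Q :: L').prod * B = (B - s') + (1 - Q) * s' := by
      rw [hsplit, ← hdiff]; abel
    rw [hdecomp, fip_add_right]
    have hterm : fip B ((1 - Q) * s') ≤ Real.sqrt (fip ((1 - Q) * B) ((1 - Q) * B))
        * Real.sqrt (fip ((1 - Q) * s') ((1 - Q) * s')) := by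
      rw [fip_proj h1 h2]
      exact fip_le _ _
    have hpyth := fip_pyth hQ.1 hQ.2 s'
    have hEnn := list_sum_nonneg L' B
    have hDnn : 0 ≤ fip B B - fip s' s' := by linarith [prod_fip_le L' hL' B]
    have hsum : (((Q :: L').map fun R => fip ((1 - R) * B) ((1 - R) * B)).sum)
        = fip ((1 - Q) * B) ((1 - Q) * B)
          + ((L'.map fun R => fip ((1 - R) * B) ((1 - R) * B)).sum) := by
      simp
    have hcs := sqrt_cs hEnn hDnn (fip_self_nonneg ((1 - Q) * B))
      (fip_self_nonneg ((1 - Q) * s'))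
    have hfinal : fip B B - fip ((Q :: L').prod * B) ((Q :: L').prod * B)
        = (fip B B - fip s' s') + fip ((1 - Q) * s') ((1 - Q) * s') := by
      rw [hsplit]; linarith [hpyth]
    rw [hsum, hfinal]
    have := ih hL'
    calc fip B (B - s') + fip B ((1 - Q) * s')
        ≤ Real.sqrt ((L'.map fun R => fip ((1 - R) * B) ((1 - R) * B)).sum)
            * Real.sqrt (fip B B - fip s' s')
          + Real.sqrt (fip ((1 - Q) * B) ((1 - Q) * B))
            * Real.sqrt (fip ((1 - Q) * s') ((1 - Q) * s')) := by linarith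
      _ ≤ _ := by
          rw [add_comm (fip ((1 - Q) * B) ((1 - Q) * B))]
          exact hcs

lemma union_bound (L : List (Matrix n n ℂ)) (hL : ∀ Q ∈ L, Qᴴ = Q ∧ Q * Q = Q)
    (B : Matrix n n ℂ) (hB : fip B B = 1) :
    1 - fip (L.prod * B) (L.prod * B)
      ≤ 2 * Real.sqrt ((L.map fun Q => fip ((1 - Q) * B) ((1 - Q) * B)).sum) := by
  set s := L.prod * B with hs
  set t := fip s s with ht
  set E := ((L.map fun Q => fip ((1 - Q) * B) ((1 - Q) * B)).sum) with hE
  have ht0 : 0 ≤ t := fip_self_nonneg s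
  have ht1 : t ≤ 1 := by rw [← hB]; exact prod_fip_le L hL B
  have hkey := key L hL B
  rw [← hs, ← ht, ← hE, hB] at hkey
  have hexp : fip (B - s) (B - s) = fip B B - fip B s - (fip s B - fip s s) := by
    rw [fip_sub_right, fip_comm (B - s) B, fip_sub_right, fip_comm (B - s) s, fip_sub_right]
  have h0 : 0 ≤ fip (B - s) (B - s) := fip_self_nonneg _
  have hsym : fip B s = fip s B := fip_comm _ _
  have h2 : 1 - t ≤ 2 * fip B (B - s) := by
    rw [fip_sub_right]
    rw [hexp, hB, ← ht, ← hsym] at h0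
    linarith [hB]
  have hsq1 : Real.sqrt (1 - t) ≤ 1 := Real.sqrt_le_one.mpr (by linarith)
  have hEnn : 0 ≤ Real.sqrt E := Real.sqrt_nonneg E
  calc 1 - t ≤ 2 * fip B (B - s) := h2
    _ ≤ 2 * (Real.sqrt E * Real.sqrt (1 - t)) := by linarith
    _ ≤ 2 * (Real.sqrt E * 1) := by nlinarith
    _ = 2 * Real.sqrt E := by ring

end SDEB
section helpers

lemma probeZero_conjTranspose (M : ℕ) : (probeZero M)ᴴ = probeZero M := by
  ext i j
  simp [probeZero, Matrix.conjTranspose_apply, Matrix.single, and_comm, apply_ite]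

lemma probeZero_mul (M : ℕ) : probeZero M * probeZero M = probeZero M := by
  rw [probeZero, Matrix.single_mul_single_same, one_mul]

lemma probeZero_trace (M : ℕ) : (probeZero M).trace = 1 := by
  rw [probeZero, Matrix.trace_single_eq_same]

lemma kron_conjT {k l : Type*} [Fintype k] [Fintype l] (X : Matrix k k ℂ) (Y : Matrix l l ℂ) :
    (X ⊗ₖ Y)ᴴ = Xᴴ ⊗ₖ Yᴴ := by
  ext ⟨a, b⟩ ⟨c, d⟩
  simp [Matrix.conjTranspose_apply, star_mul']

end helpers

set_option maxHeartbeats 2000000 in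
/-- **Error bound for the sequential decoder.**
Let `ρ₁, …, ρ_M` be states and `0 ≤ A_j ≤ I` test operators on `ℂ^d`, and let
`Π₁, …, Π_M` be orthogonal projections on `ℂ^d ⊗ (ℂ²)^{⊗M}` that are Naimark extensions
of the `A_j`.  Then the error probability of the sequential decoder on input `ρ_m`,
`1 − Tr (Π_m (I−Π_{m−1}) ⋯ (I−Π₁) (ρ_m ⊗ |0̄⟩⟨0̄|) (I−Π₁) ⋯ (I−Π_{m−1}) Π_m)`,
is at most `2 √(1 − Tr (A_m ρ_m) + ∑_{j ≠ m} Tr (A_j ρ_m))`. -/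
theorem sequential_decoder_error_bound {d M : ℕ}
    (ρ : Fin M → Matrix (Fin d) (Fin d) ℂ)
    (hρ : ∀ j, (ρ j).PosSemidef) (hρtr : ∀ j, (ρ j).trace = 1)
    (A : Fin M → Matrix (Fin d) (Fin d) ℂ)
    (hA : ∀ j, (A j).PosSemidef)
    (hAI : ∀ j, ((1 : Matrix (Fin d) (Fin d) ℂ) - A j).PosSemidef)
    (m : Fin M)
    (P : Fin M → Matrix (Fin d × (Fin M → Fin 2)) (Fin d × (Fin M → Fin 2)) ℂ)
    (hherm : ∀ j, (P j).IsHermitian) (hproj : ∀ j, P j * P j = P j)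
    (hNaimark : ∀ j (τ : Matrix (Fin d) (Fin d) ℂ),
      (P j * (τ ⊗ₖ probeZero M)).trace = (A j * τ).trace) :
    1 - (P m *
          (List.ofFn fun j : Fin (m : ℕ) => 1 - P (Fin.castLE m.isLt.le j)).reverse.prod *
          (ρ m ⊗ₖ probeZero M) *
          (List.ofFn fun j : Fin (m : ℕ) => 1 - P (Fin.castLE m.isLt.le j)).prod *
          P m).trace.re
      ≤ 2 * Real.sqrt (1 - (A m * ρ m).trace.re
          + ∑ j ∈ Finset.univ.erase m, (A j * ρ m).trace.re) := by
  classical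
  set ρt : Matrix (Fin d × (Fin M → Fin 2)) (Fin d × (Fin M → Fin 2)) ℂ :=
    ρ m ⊗ₖ probeZero M with hρt
  obtain ⟨S, hSh, hSS⟩ : ∃ S : Matrix (Fin d) (Fin d) ℂ, Sᴴ = S ∧ S * S = ρ m := by
    open scoped MatrixOrder in
    exact ⟨CFC.sqrt (ρ m), (CFC.sqrt_nonneg _).posSemidef.1, CFC.sqrt_mul_sqrt_self _ (hρ m).nonneg⟩
  set B : Matrix (Fin d × (Fin M → Fin 2)) (Fin d × (Fin M → Fin 2)) ℂ :=
    S ⊗ₖ probeZero M with hBdef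
  have hBherm : Bᴴ = B := by
    rw [hBdef, kron_conjT, hSh, probeZero_conjTranspose]
  have hBB : B * B = ρt := by
    rw [hBdef, ← Matrix.mul_kronecker_mul, hSS, probeZero_mul, hρt]
  have htrρt : ρt.trace = 1 := by
    rw [hρt, Matrix.trace_kronecker, hρtr m, probeZero_trace, one_mul]
  have hfipBB : SDEB.fip B B = 1 := by
    rw [SDEB.fip, hBherm, hBB, htrρt, Complex.one_re]
  set R : List (Matrix (Fin d × (Fin M → Fin 2)) (Fin d × (Fin M → Fin 2)) ℂ) :=
    List.ofFn (fun j : Fin (m : ℕ) => 1 - P (Fin.castLE m.isLt.le j)) with hR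
  set L := P m :: R.reverse with hL
  have hRmem : ∀ Q ∈ R.reverse, Qᴴ = Q ∧ Q * Q = Q := by
    intro Q hQ
    rw [List.mem_reverse, hR, List.mem_ofFn] at hQ
    obtain ⟨j, rfl⟩ := hQ
    exact SDEB.herm_idem_oneSub (hherm _) (hproj _)
  have hLgood : ∀ Q ∈ L, Qᴴ = Q ∧ Q * Q = Q := by
    intro Q hQ
    rcases List.mem_cons.mp hQ with h | h
    · subst h; exact ⟨hherm m, hproj m⟩
    · exact hRmem Q h
  have hfipQ : ∀ Q : Matrix (Fin d × (Fin M → Fin 2)) (Fin d × (Fin M → Fin 2)) ℂ,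
      Qᴴ = Q → Q * Q = Q → SDEB.fip (Q * B) (Q * B) = ((Q * ρt).trace).re := by
    intro Q h1 h2
    rw [SDEB.fip, Matrix.conjTranspose_mul, hBherm, h1]
    have e1 : B * Q * (Q * B) = B * (Q * B) := by
      rw [Matrix.mul_assoc, ← Matrix.mul_assoc Q Q B, h2]
    rw [e1, Matrix.trace_mul_comm, Matrix.mul_assoc, hBB]
  -- the adjoint of the full product
  have hPi : L.prod = P m * R.reverse.prod := by rw [hL, List.prod_cons]
  have hmapCt : (R.reverse).map Matrix.conjTranspose = R.reverse := by
    conv_rhs => rw [← List.map_id R.reverse]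
    exact List.map_congr_left (fun Q hQ => (hRmem Q hQ).1)
  have hPiH : (L.prod)ᴴ = R.prod * P m := by
    rw [hPi, Matrix.conjTranspose_mul, (hherm m).eq, Matrix.conjTranspose_list_prod,
      hmapCt, List.reverse_reverse]
  have hgoalTr : SDEB.fip (L.prod * B) (L.prod * B)
      = (P m * R.reverse.prod * ρt * R.prod * P m).trace.re := by
    rw [SDEB.fip, Matrix.conjTranspose_mul, hBherm, Matrix.trace_mul_comm]
    have e2 : (L.prod * B) * (B * (L.prod)ᴴ) = P m * R.reverse.prod * ρt * R.prod * P m := by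
      rw [hPiH, hPi, ← hBB]
      simp only [Matrix.mul_assoc]
    rw [e2]
  -- the error sum
  have hsum : ((L.map fun Q => SDEB.fip ((1 - Q) * B) ((1 - Q) * B)).sum)
      = (1 - (A m * ρ m).trace.re)
        + ∑ j : Fin (m : ℕ), (A (Fin.castLE m.isLt.le j) * ρ m).trace.re := by
    rw [hL, List.map_cons, List.sum_cons]
    congr 1
    · rw [hfipQ _ (SDEB.herm_idem_oneSub (hherm m) (hproj m)).1
        (SDEB.herm_idem_oneSub (hherm m) (hproj m)).2]
      rw [Matrix.sub_mul, Matrix.one_mul, Matrix.trace_sub, htrρt, hρt, hNaimark m (ρ m)]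
      simp
    · rw [List.map_reverse, List.sum_reverse, hR, List.map_ofFn, List.sum_ofFn]
      apply Finset.sum_congr rfl
      intro j _
      simp only [Function.comp_apply, sub_sub_cancel]
      rw [hfipQ _ (hherm _) (hproj _), hρt, hNaimark]
  have hnn : ∀ j, 0 ≤ (A j * ρ m).trace.re := by
    intro j
    have h := hfipQ (P j) (hherm j) (hproj j)
    have h2 : ((P j * ρt).trace).re = ((A j * ρ m).trace).re := by
      rw [hρt, hNaimark j (ρ m)]
    rw [← h2, ← h]
    exact SDEB.fip_self_nonneg _
  have hsub : ∑ j : Fin (m : ℕ), (A (Fin.castLE m.isLt.le j) * ρ m).trace.re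
      ≤ ∑ j ∈ Finset.univ.erase m, (A j * ρ m).trace.re := by
    have hrw : (∑ j : Fin (m : ℕ), (A (Fin.castLE m.isLt.le j) * ρ m).trace.re)
        = ∑ x ∈ Finset.univ.map (Fin.castLEEmb m.isLt.le), (A x * ρ m).trace.re := by
      rw [Finset.sum_map]
      simp [Fin.castLEEmb]
    rw [hrw]
    apply Finset.sum_le_sum_of_subset_of_nonneg
    · intro x hx
      rw [Finset.mem_map] at hx
      obtain ⟨j, _, rfl⟩ := hx
      refine Finset.mem_erase.mpr ⟨?_, Finset.mem_univ _⟩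
      exact Fin.ne_of_val_ne (Nat.ne_of_lt j.isLt)
    · intro i _ _
      exact hnn i
  have hub := SDEB.union_bound L hLgood B hfipBB
  rw [hgoalTr, hsum] at hub
  calc 1 - (P m * R.reverse.prod * ρt * R.prod * P m).trace.re
      ≤ 2 * Real.sqrt ((1 - (A m * ρ m).trace.re)
          + ∑ j : Fin (m : ℕ), (A (Fin.castLE m.isLt.le j) * ρ m).trace.re) := hub
    _ ≤ 2 * Real.sqrt (1 - (A m * ρ m).trace.re
          + ∑ j ∈ Finset.univ.erase m, (A j * ρ m).trace.re) := by
        apply mul_le_mul_of_nonneg_left (Real.sqrt_le_sqrt (by linarith)) (by norm_num)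
end

section
/- Let X be a finite set, p a probability distribution on X, ρ_x quantum states on ℂ^d for x ∈ X, and Q a matrix on ℂ^X ⊗ ℂ^d with 0 ≤ Q ≤ I and Tr{Q ρ_{XB}} ≥ 1 − ε′, where ρ_{XB} = Σ_x p(x)|x⟩⟨x| ⊗ ρ_x. For each x define A_x = Tr_X{(|x⟩⟨x| ⊗ I_d) Q}. Then the expectation, over codebooks (x₁,…,x_M) drawn i.i.d. from p, of the quantity 2·√( 1 − Tr{A_{x_m} ρ_{x_m}} + Σ_{j ≠ m} Tr{A_{x_j} ρ_{x_m}} ) for any fixed message index m is at most 2·√( ε′ + M · Tr{Q (ρ_X ⊗ ρ_B)} ), where ρ_X = Σ_x p(x)|x⟩⟨x| and ρ_B = Σ_x p(x)ρ_x. -/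
open Matrix Kronecker ComplexOrder

/-- Partial trace over the first (classical) tensor factor:
`(traceLeft M) i j = ∑ₐ M (a, i) (a, j)`. -/
noncomputable def traceLeft {α β : Type*} [Fintype α]
    (M : Matrix (α × β) (α × β) ℂ) : Matrix β β ℂ :=
  Matrix.of fun i j => ∑ a, M (a, i) (a, j)

/-- The test operator `A_x = Tr_X ((|x⟩⟨x| ⊗ I) Q)` associated with the letter `x`. -/
noncomputable def testOp {d : ℕ} {X : Type} [Fintype X] [DecidableEq X]
    (Q : Matrix (X × Fin d) (X × Fin d) ℂ) (x : X) : Matrix (Fin d) (Fin d) ℂ :=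
  traceLeft ((Matrix.single x x (1 : ℂ) ⊗ₖ (1 : Matrix (Fin d) (Fin d) ℂ)) * Q)

/-! ### Matrix helper lemmas -/

lemma testOp_apply {d : ℕ} {X : Type} [Fintype X] [DecidableEq X]
    (Q : Matrix (X × Fin d) (X × Fin d) ℂ) (x : X) (i j : Fin d) :
    testOp Q x i j = Q (x, i) (x, j) := by
  simp [testOp, traceLeft, Matrix.mul_apply, Fintype.sum_prod_type,
    Matrix.single, Matrix.one_apply, ite_and, Finset.sum_ite_eq, Finset.sum_ite_eq']

lemma testOp_eq_submatrix {d : ℕ} {X : Type} [Fintype X] [DecidableEq X]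
    (Q : Matrix (X × Fin d) (X × Fin d) ℂ) (x : X) :
    testOp Q x = Q.submatrix (Prod.mk x) (Prod.mk x) := by
  ext i j; simp [testOp_apply]

lemma trace_mul_kron {d : ℕ} {X : Type} [Fintype X] [DecidableEq X]
    (Q : Matrix (X × Fin d) (X × Fin d) ℂ) (x : X) (B : Matrix (Fin d) (Fin d) ℂ) :
    (Q * (Matrix.single x x (1 : ℂ) ⊗ₖ B)).trace = (testOp Q x * B).trace := by
  simp [Matrix.trace, Matrix.mul_apply, Matrix.diag, Fintype.sum_prod_type, testOp_apply,
    Matrix.single, Matrix.one_apply, ite_and, Finset.sum_ite_eq, Finset.sum_ite_eq',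
    Finset.mul_sum]

lemma psd_trace_re_nonneg {n : Type*} [Fintype n] [DecidableEq n] {A : Matrix n n ℂ}
    (hA : A.PosSemidef) : 0 ≤ A.trace.re := by
  rw [Matrix.trace]
  have h : ∀ i, 0 ≤ (A i i).re := by
    intro i
    have := hA.diag_nonneg (i := i)
    rw [Complex.le_def] at this
    simpa using this.1
  calc (0:ℝ) ≤ ∑ i, (A i i).re := Finset.sum_nonneg fun i _ => h i
  _ = (∑ i, A.diag i).re := by simp [Complex.re_sum, Matrix.diag]

lemma trace_mul_re_nonneg {n : Type*} [Fintype n] [DecidableEq n] {A B : Matrix n n ℂ}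
    (hA : A.PosSemidef) (hB : B.PosSemidef) : 0 ≤ (A * B).trace.re := by
  open scoped MatrixOrder in
  obtain ⟨C, hC⟩ := CStarAlgebra.nonneg_iff_eq_star_mul_self.mp hA.nonneg
  rw [hC, Matrix.star_eq_conjTranspose]
  have : (Cᴴ * C * B).trace = (C * B * Cᴴ).trace := by
    rw [Matrix.trace_mul_cycle]; exact Matrix.trace_mul_cycle B Cᴴ C
  rw [this]
  exact psd_trace_re_nonneg (hB.mul_mul_conjTranspose_same C)

lemma trace_mul_re_le_one {n : Type*} [Fintype n] [DecidableEq n] {A B : Matrix n n ℂ}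
    (hA : ((1 : Matrix n n ℂ) - A).PosSemidef) (hB : B.PosSemidef) (hBtr : B.trace = 1) :
    (A * B).trace.re ≤ 1 := by
  have h := trace_mul_re_nonneg hA hB
  rw [Matrix.sub_mul, Matrix.one_mul] at h
  rw [Matrix.trace_sub, hBtr] at h
  simp only [Complex.sub_re, Complex.one_re] at h
  linarith

lemma sum_kron {l m n p R : Type*} [Fintype l] [CommRing R] {ι : Type*} (s : Finset ι)
    (A : ι → Matrix l m R) (B : Matrix n p R) :
    (∑ i ∈ s, A i) ⊗ₖ B = ∑ i ∈ s, (A i ⊗ₖ B) := by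
  ext ⟨i, j⟩ ⟨k, l'⟩
  simp [Matrix.kroneckerMap_apply, Matrix.sum_apply, Finset.sum_mul]

lemma kron_sum {l m n p R : Type*} [Fintype l] [CommRing R] {ι : Type*} (s : Finset ι)
    (A : Matrix l m R) (B : ι → Matrix n p R) :
    A ⊗ₖ (∑ i ∈ s, B i) = ∑ i ∈ s, (A ⊗ₖ B i) := by
  ext ⟨i, j⟩ ⟨k, l'⟩
  simp [Matrix.kroneckerMap_apply, Matrix.sum_apply, Finset.mul_sum]

/-! ### Codebook expectation lemmas -/

lemma funSplit_prod {X ι : Type*} [Fintype X] [Fintype ι] [DecidableEq ι]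
    (p : X → ℝ) (i : ι) (x : X) (g : {j // j ≠ i} → X) :
    (∏ j, p (((Equiv.funSplitAt i X).symm (x, g)) j))
      = p x * ∏ j : {j // j ≠ i}, p (g j) := by
  rw [← Finset.mul_prod_erase Finset.univ _ (Finset.mem_univ i)]
  congr 1
  · simp [Equiv.funSplitAt, Equiv.piSplitAt]
  · rw [Finset.prod_subtype (p := fun j => j ≠ i) (Finset.univ.erase i) (fun j => by simp)
      (fun j => p (((Equiv.funSplitAt i X).symm (x, g)) j))]
    refine Finset.prod_congr rfl fun j _ => ?_
    simp [Equiv.funSplitAt, Equiv.piSplitAt, j.2]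

lemma sum_prod_mul_single {X ι : Type*} [Fintype X] [Fintype ι] [DecidableEq ι]
    (p : X → ℝ) (hp1 : ∑ x, p x = 1) (i : ι) (h : X → ℝ) :
    ∑ c : ι → X, (∏ j, p (c j)) * h (c i) = ∑ x, p x * h x := by
  classical
  rw [← Equiv.sum_comp (Equiv.funSplitAt i X).symm
    (fun c => (∏ j, p (c j)) * h (c i))]
  rw [Fintype.sum_prod_type]
  have key : ∀ (x : X) (g : {j // j ≠ i} → X),
      (((Equiv.funSplitAt i X).symm (x, g)) i) = x := by
    intro x g; simp [Equiv.funSplitAt, Equiv.piSplitAt]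
  calc ∑ x, ∑ g : {j // j ≠ i} → X,
        (∏ j, p (((Equiv.funSplitAt i X).symm (x, g)) j)) * h (((Equiv.funSplitAt i X).symm (x, g)) i)
      = ∑ x, ∑ g : {j // j ≠ i} → X, (p x * h x) * ∏ j : {j // j ≠ i}, p (g j) := by
        refine Finset.sum_congr rfl fun x _ => Finset.sum_congr rfl fun g _ => ?_
        rw [funSplit_prod, key]; ring
    _ = ∑ x, (p x * h x) * ∑ g : {j // j ≠ i} → X, ∏ j : {j // j ≠ i}, p (g j) := by
        simp [Finset.mul_sum]
    _ = ∑ x, p x * h x := by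
        have : ∑ g : {j // j ≠ i} → X, ∏ j : {j // j ≠ i}, p (g j) = 1 := by
          rw [← Fintype.prod_sum (fun (_ : {j // j ≠ i}) (x : X) => p x)]
          simp [hp1]
        simp [this]

lemma sum_prod_mul_pair {X ι : Type*} [Fintype X] [Fintype ι] [DecidableEq ι]
    (p : X → ℝ) (hp1 : ∑ x, p x = 1) {i k : ι} (hik : i ≠ k) (h : X → X → ℝ) :
    ∑ c : ι → X, (∏ j, p (c j)) * h (c i) (c k)
      = ∑ x, ∑ y, p x * p y * h x y := by
  classical
  rw [← Equiv.sum_comp (Equiv.funSplitAt i X).symm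
    (fun c => (∏ j, p (c j)) * h (c i) (c k))]
  rw [Fintype.sum_prod_type]
  have keyi : ∀ (x : X) (g : {j // j ≠ i} → X),
      (((Equiv.funSplitAt i X).symm (x, g)) i) = x := by
    intro x g; simp [Equiv.funSplitAt, Equiv.piSplitAt]
  have keyk : ∀ (x : X) (g : {j // j ≠ i} → X),
      (((Equiv.funSplitAt i X).symm (x, g)) k) = g ⟨k, hik.symm⟩ := by
    intro x g; simp [Equiv.funSplitAt, Equiv.piSplitAt, hik.symm]
  refine Finset.sum_congr rfl fun x _ => ?_
  calc ∑ g : {j // j ≠ i} → X,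
        (∏ j, p (((Equiv.funSplitAt i X).symm (x, g)) j)) * h (((Equiv.funSplitAt i X).symm (x, g)) i) (((Equiv.funSplitAt i X).symm (x, g)) k)
      = ∑ g : {j // j ≠ i} → X, p x * ((∏ j : {j // j ≠ i}, p (g j)) * h x (g ⟨k, hik.symm⟩)) := by
        refine Finset.sum_congr rfl fun g _ => ?_
        rw [funSplit_prod, keyi, keyk]; ring
    _ = p x * ∑ g : {j // j ≠ i} → X, (∏ j : {j // j ≠ i}, p (g j)) * h x (g ⟨k, hik.symm⟩) := by
        rw [Finset.mul_sum]
    _ = p x * ∑ y, p y * h x y := by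
        congr 1
        exact sum_prod_mul_single p hp1 (⟨k, hik.symm⟩ : {j // j ≠ i}) (h x)
    _ = ∑ y, p x * p y * h x y := by
        rw [Finset.mul_sum]
        exact Finset.sum_congr rfl fun y _ => by ring

lemma jensen_sqrt {ι : Type*} [Fintype ι] (w f : ι → ℝ)
    (hw : ∀ i, 0 ≤ w i) (hw1 : ∑ i, w i = 1) (hf : ∀ i, 0 ≤ f i) :
    ∑ i, w i * Real.sqrt (f i) ≤ Real.sqrt (∑ i, w i * f i) := by
  have h0 : 0 ≤ ∑ i, w i * Real.sqrt (f i) :=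
    Finset.sum_nonneg fun i _ => mul_nonneg (hw i) (Real.sqrt_nonneg _)
  have hS : 0 ≤ ∑ i, w i * f i :=
    Finset.sum_nonneg fun i _ => mul_nonneg (hw i) (hf i)
  refine (Real.le_sqrt h0 hS).mpr ?_
  calc (∑ i, w i * Real.sqrt (f i)) ^ 2 ≤ (∑ i, w i) * ∑ i, w i * f i := by
        refine Finset.sum_sq_le_sum_mul_sum_of_sq_eq_mul Finset.univ
          (fun i _ => hw i) (fun i _ => mul_nonneg (hw i) (hf i)) (fun i _ => ?_)
        rw [mul_pow, Real.sq_sqrt (hf i)]; ring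
    _ = ∑ i, w i * f i := by rw [hw1]; ring

/-- The abstract averaging bound. -/
lemma avg_bound {X ι : Type*} [Fintype X] [Fintype ι] [DecidableEq ι]
    (p : X → ℝ) (hp0 : ∀ x, 0 ≤ p x) (hp1 : ∑ x, p x = 1)
    (T : X → X → ℝ) (hT0 : ∀ x y, 0 ≤ T x y) (hT1 : ∀ x, T x x ≤ 1)
    (m : ι) (ε' : ℝ) (hE : 1 - ε' ≤ ∑ x, p x * T x x)
    (Mr : ℝ) (hM : ((Finset.univ.erase m).card : ℝ) ≤ Mr) :
    ∑ c : ι → X, (∏ j, p (c j)) *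
        (2 * Real.sqrt (1 - T (c m) (c m) + ∑ j ∈ Finset.univ.erase m, T (c j) (c m)))
      ≤ 2 * Real.sqrt (ε' + Mr * ∑ x, ∑ y, p x * p y * T x y) := by
  classical
  have hS0 : 0 ≤ ∑ x, ∑ y, p x * p y * T x y :=
    Finset.sum_nonneg fun x _ => Finset.sum_nonneg fun y _ =>
      mul_nonneg (mul_nonneg (hp0 x) (hp0 y)) (hT0 x y)
  have hw0 : ∀ c : ι → X, 0 ≤ ∏ j, p (c j) := fun c => Finset.prod_nonneg fun j _ => hp0 _
  have hw1 : ∑ c : ι → X, ∏ j, p (c j) = 1 := by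
    have h := sum_prod_mul_single p hp1 m (fun _ => (1:ℝ))
    simpa [hp1] using h
  have hf0 : ∀ c : ι → X,
      0 ≤ 1 - T (c m) (c m) + ∑ j ∈ Finset.univ.erase m, T (c j) (c m) := fun c =>
    add_nonneg (by linarith [hT1 (c m)]) (Finset.sum_nonneg fun j _ => hT0 _ _)
  have hEf : ∑ c : ι → X, (∏ j, p (c j)) *
      (1 - T (c m) (c m) + ∑ j ∈ Finset.univ.erase m, T (c j) (c m))
      ≤ ε' + Mr * ∑ x, ∑ y, p x * p y * T x y := by
    have e1 : ∑ c : ι → X, (∏ j, p (c j)) *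
        (1 - T (c m) (c m) + ∑ j ∈ Finset.univ.erase m, T (c j) (c m))
        = (∑ c : ι → X, ∏ j, p (c j))
          - (∑ c : ι → X, (∏ j, p (c j)) * T (c m) (c m))
          + ∑ j ∈ Finset.univ.erase m, ∑ c : ι → X, (∏ j', p (c j')) * T (c j) (c m) := by
      rw [Finset.sum_comm]
      rw [← Finset.sum_sub_distrib, ← Finset.sum_add_distrib]
      refine Finset.sum_congr rfl fun c _ => ?_
      rw [mul_add, Finset.mul_sum, mul_sub, mul_one]
    rw [e1, hw1]
    rw [sum_prod_mul_single p hp1 m (fun x => T x x)]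
    have e2 : ∑ j ∈ Finset.univ.erase m, ∑ c : ι → X, (∏ j', p (c j')) * T (c j) (c m)
        = ((Finset.univ.erase m).card : ℝ) * ∑ x, ∑ y, p x * p y * T x y := by
      rw [Finset.sum_congr rfl fun j hj =>
        sum_prod_mul_pair p hp1 (Finset.mem_erase.mp hj).1 T]
      rw [Finset.sum_const, nsmul_eq_mul]
    rw [e2]
    have : ((Finset.univ.erase m).card : ℝ) * (∑ x, ∑ y, p x * p y * T x y)
        ≤ Mr * ∑ x, ∑ y, p x * p y * T x y := mul_le_mul_of_nonneg_right hM hS0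
    linarith
  calc ∑ c : ι → X, (∏ j, p (c j)) *
        (2 * Real.sqrt (1 - T (c m) (c m) + ∑ j ∈ Finset.univ.erase m, T (c j) (c m)))
      = 2 * ∑ c : ι → X, (∏ j, p (c j)) *
        Real.sqrt (1 - T (c m) (c m) + ∑ j ∈ Finset.univ.erase m, T (c j) (c m)) := by
        rw [Finset.mul_sum]
        exact Finset.sum_congr rfl fun c _ => by ring
    _ ≤ 2 * Real.sqrt (∑ c : ι → X, (∏ j, p (c j)) *
        (1 - T (c m) (c m) + ∑ j ∈ Finset.univ.erase m, T (c j) (c m))) := by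
        have := jensen_sqrt (fun c : ι → X => ∏ j, p (c j))
          (fun c => 1 - T (c m) (c m) + ∑ j ∈ Finset.univ.erase m, T (c j) (c m))
          hw0 hw1 hf0
        linarith
    _ ≤ 2 * Real.sqrt (ε' + Mr * ∑ x, ∑ y, p x * p y * T x y) := by
        have := Real.sqrt_le_sqrt hEf
        linarith

/-- **The averaging (random-coding) step of the one-shot achievability proof.**
For a distribution `p` on `X`, states `ρ_x`, an operator `0 ≤ Q ≤ I` with
`Tr (Q ρ_{XB}) ≥ 1 − ε′` and `A_x = Tr_X ((|x⟩⟨x| ⊗ I) Q)`, the expectation over i.i.d.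
codebooks `(x₁, …, x_M) ∼ p^{×M}` of
`2 √(1 − Tr (A_{x_m} ρ_{x_m}) + ∑_{j ≠ m} Tr (A_{x_j} ρ_{x_m}))`
for any fixed message `m` is at most `2 √(ε′ + M Tr (Q (ρ_X ⊗ ρ_B)))`. -/
theorem random_codebook_averaging {d : ℕ} {X : Type} [Fintype X] [DecidableEq X]
    (p : X → ℝ) (hp0 : ∀ x, 0 ≤ p x) (hp1 : ∑ x, p x = 1)
    (ρ : X → Matrix (Fin d) (Fin d) ℂ)
    (hρ : ∀ x, (ρ x).PosSemidef) (hρtr : ∀ x, (ρ x).trace = 1)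
    (Q : Matrix (X × Fin d) (X × Fin d) ℂ)
    (hQ : Q.PosSemidef) (hQI : ((1 : Matrix (X × Fin d) (X × Fin d) ℂ) - Q).PosSemidef)
    (ε' : ℝ)
    (hQρ : 1 - ε' ≤ (Q * ∑ x, (p x : ℂ) • (Matrix.single x x (1 : ℂ) ⊗ₖ ρ x)).trace.re)
    {M : ℕ} (m : Fin M) :
    ∑ c : Fin M → X, (∏ j, p (c j)) *
        (2 * Real.sqrt (1 - (testOp Q (c m) * ρ (c m)).trace.re
          + ∑ j ∈ Finset.univ.erase m, (testOp Q (c j) * ρ (c m)).trace.re))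
      ≤ 2 * Real.sqrt (ε' + M *
          (Q * ((∑ x, (p x : ℂ) • Matrix.single x x (1 : ℂ)) ⊗ₖ
            (∑ x, (p x : ℂ) • ρ x))).trace.re) := by
  classical
  -- positivity facts for the test operators
  have hA : ∀ x, (testOp Q x).PosSemidef := fun x => by
    rw [testOp_eq_submatrix]; exact hQ.submatrix _
  have hAI : ∀ x, ((1 : Matrix (Fin d) (Fin d) ℂ) - testOp Q x).PosSemidef := fun x => by
    have h1 : ((1 : Matrix (X × Fin d) (X × Fin d) ℂ) - Q).submatrix (Prod.mk x) (Prod.mk x)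
        = (1 : Matrix (Fin d) (Fin d) ℂ) - testOp Q x := by
      ext i j
      simp [Matrix.submatrix_apply, Matrix.sub_apply, Matrix.one_apply, testOp_apply,
        Prod.ext_iff]
    rw [← h1]; exact hQI.submatrix _
  have hT0 : ∀ x y, 0 ≤ (testOp Q x * ρ y).trace.re := fun x y =>
    trace_mul_re_nonneg (hA x) (hρ y)
  have hT1 : ∀ x, (testOp Q x * ρ x).trace.re ≤ 1 := fun x =>
    trace_mul_re_le_one (hAI x) (hρ x) (hρtr x)
  -- identity for the diagonal expectation
  have hE1 : (Q * ∑ x, (p x : ℂ) • (Matrix.single x x (1 : ℂ) ⊗ₖ ρ x)).trace.re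
      = ∑ x, p x * (testOp Q x * ρ x).trace.re := by
    rw [Finset.mul_sum, Matrix.trace_sum, Complex.re_sum]
    refine Finset.sum_congr rfl fun x _ => ?_
    rw [Matrix.mul_smul, Matrix.trace_smul, trace_mul_kron]
    simp [smul_eq_mul, Complex.re_ofReal_mul]
  -- identity for the cross expectation
  have hSid : (Q * ((∑ x, (p x : ℂ) • Matrix.single x x (1 : ℂ)) ⊗ₖ
        (∑ x, (p x : ℂ) • ρ x))).trace.re
      = ∑ x, ∑ y, p x * p y * (testOp Q x * ρ y).trace.re := by
    rw [sum_kron]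
    rw [Finset.mul_sum, Matrix.trace_sum, Complex.re_sum]
    refine Finset.sum_congr rfl fun x _ => ?_
    rw [kron_sum]
    rw [Finset.mul_sum, Matrix.trace_sum, Complex.re_sum]
    refine Finset.sum_congr rfl fun y _ => ?_
    rw [Matrix.smul_kronecker, Matrix.kronecker_smul, smul_smul]
    rw [Matrix.mul_smul, Matrix.trace_smul, trace_mul_kron]
    simp [smul_eq_mul, Complex.re_ofReal_mul]
  rw [hSid]
  refine avg_bound p hp0 hp1 (fun x y => (testOp Q x * ρ y).trace.re) hT0 hT1 m ε'
    (by rw [← hE1]; exact hQρ) M ?_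
  rw [Finset.card_erase_of_mem (Finset.mem_univ m), Finset.card_univ, Fintype.card_fin]
  exact_mod_cast Nat.sub_le M 1
end
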